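/- Let W be an algebra over a field F that is (not necessarily properly) covered by subspaces W_g indexed by a finite group G, satisfying W_g W_h \subseteq W_{gh} and \sum_g W_g = W. Let FG be the group algebra with its natural G-grading and let W_G be the subalgebra of W \otimes_F FG generated by the subspaces W_g \otimes Fg for g \in G. Then: (a) W_G is G-graded with (W_G)_g = W_g \otimes Fg; and (b) the map W_G \to W sending x \otimes g \mapsto x is a surjective G-graded algebra homomorphism onto W equipped with any genuine G-grading V = \oplus V_g with V_g \subseteq W_g, whenever the W_g are the preimages of such V_g under a surjection. -/

import Mathlib

open scoped TensorProduct

/-- The `g`-component `W_g ⊗ Fg` inside `W ⊗_F FG`. -/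
noncomputable def coverComp {F : Type*} [Field F] {G : Type*} [Group G] {W : Type*} [Ring W]
    [Algebra F W] (𝒲 : G → Submodule F W) (g : G) :
    Submodule F (W ⊗[F] MonoidAlgebra F G) :=
  Submodule.span F
    {z | ∃ a ∈ 𝒲 g, z = a ⊗ₜ[F] (MonoidAlgebra.single g (1 : F))}

section aux
variable {F : Type*} [Field F] {G : Type*} [Group G] [DecidableEq G]
  {W : Type*} [Ring W] [Algebra F W]

noncomputable def proj (g : G) : (W ⊗[F] MonoidAlgebra F G) →ₗ[F] W :=
  (TensorProduct.rid F W).toLinearMap ∘ₗ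
    TensorProduct.map LinearMap.id ((Finsupp.lapply g : (G →₀ F) →ₗ[F] F) ∘ₗ (MonoidAlgebra.coeffLinearEquiv F).toLinearMap)

lemma proj_tmul (g : G) (a : W) (h : G) :
    proj (F := F) g (a ⊗ₜ (MonoidAlgebra.single h 1)) = if h = g then a else 0 := by
  simp only [proj, LinearMap.comp_apply, TensorProduct.map_tmul, LinearMap.id_apply,
    LinearEquiv.coe_coe, TensorProduct.rid_tmul]
  show (MonoidAlgebra.single h (1:F)).coeff g • a = _
  rw [MonoidAlgebra.coeff_single, Finsupp.single_apply]
  split <;> simp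

lemma proj_eq_of_mem {𝒲 : G → Submodule F W} {g : G} {x : W ⊗[F] MonoidAlgebra F G}
    (hx : x ∈ coverComp 𝒲 g) :
    x = (proj g x) ⊗ₜ[F] (MonoidAlgebra.single g (1 : F)) ∧ proj g x ∈ 𝒲 g := by
  induction hx using Submodule.span_induction with
  | mem z hz =>
    obtain ⟨a, ha, rfl⟩ := hz
    rw [proj_tmul]; simp [ha]
  | zero => simp
  | add x y hx hy ihx ihy =>
    refine ⟨?_, by simp only [map_add]; exact add_mem ihx.2 ihy.2⟩
    rw [map_add, TensorProduct.add_tmul]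
    exact congrArg₂ (· + ·) ihx.1 ihy.1
  | smul c x hx ih =>
    refine ⟨?_, by simp only [map_smul]; exact Submodule.smul_mem _ _ ih.2⟩
    rw [map_smul, ← TensorProduct.smul_tmul']
    exact congrArg (c • ·) ih.1

lemma proj_eq_zero_of_mem {𝒲 : G → Submodule F W} {g h : G} (hne : h ≠ g)
    {x : W ⊗[F] MonoidAlgebra F G} (hx : x ∈ coverComp 𝒲 h) : proj g x = 0 := by
  induction hx using Submodule.span_induction with
  | mem z hz => obtain ⟨a, _, rfl⟩ := hz; rw [proj_tmul]; simp [hne]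
  | zero => simp
  | add x y _ _ ihx ihy => rw [map_add, ihx, ihy, add_zero]
  | smul c x _ ih => rw [map_smul, ih, smul_zero]

end aux

/-- Let `W` be an `F`-algebra covered by subspaces `W_g` (`g ∈ G`, `G`
finite) with `W_g W_h ⊆ W_{gh}` and `∑_g W_g = W`.  Inside `W ⊗_F FG` the subspaces
`C g = W_g ⊗ Fg` are independent, multiply correctly (`C g · C h ⊆ C (gh)`), and the
subalgebra `W_G` they generate is exactly their sum — so `W_G` is genuinely `G`-graded
with components `W_g ⊗ Fg`.  Moreover, when the `W_g` arise as preimages of the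
components `ℬ g` of a genuinely `G`-graded algebra `B` under a surjection `η : W → B`,
the map `x ⊗ g ↦ η x` is a multiplicative `G`-graded surjection: it carries each
component `C g` onto `ℬ g`. -/
theorem stmt_6 {F : Type*} [Field F] {G : Type*} [Group G] [Finite G] [DecidableEq G]
    {W : Type*} [Ring W] [Algebra F W]
    {B : Type*} [Ring B] [Algebra F B]
    (ℬ : G → Submodule F B) [DirectSum.Decomposition ℬ]
    (hBmul : ∀ g h : G, ∀ a ∈ ℬ g, ∀ b ∈ ℬ h, a * b ∈ ℬ (g * h))
    (η : W →ₐ[F] B) (hη : Function.Surjective η)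
    (𝒲 : G → Submodule F W)
    (h𝒲 : ∀ g, 𝒲 g = (ℬ g).comap η.toLinearMap)
    (hWmul : ∀ g h : G, ∀ a ∈ 𝒲 g, ∀ b ∈ 𝒲 h, a * b ∈ 𝒲 (g * h))
    (hWcover : (⨆ g, 𝒲 g) = (⊤ : Submodule F W)) :
    iSupIndep (coverComp 𝒲) ∧
    (∀ g h : G, ∀ x ∈ coverComp 𝒲 g, ∀ y ∈ coverComp 𝒲 h,
      x * y ∈ coverComp 𝒲 (g * h)) ∧
    (⨆ g, coverComp 𝒲 g) =
      NonUnitalSubalgebra.toSubmodule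
        (NonUnitalAlgebra.adjoin F (⋃ g, (coverComp 𝒲 g : Set (W ⊗[F] MonoidAlgebra F G)))) ∧
    (∀ g, Submodule.map
        ((TensorProduct.rid F B).toLinearMap ∘ₗ
          TensorProduct.map η.toLinearMap
            (MonoidAlgebra.lift F F G (1 : G →* F)).toLinearMap)
        (coverComp 𝒲 g) = ℬ g) ∧
    (∀ x y : W ⊗[F] MonoidAlgebra F G,
      ((TensorProduct.rid F B).toLinearMap ∘ₗ
          TensorProduct.map η.toLinearMap
            (MonoidAlgebra.lift F F G (1 : G →* F)).toLinearMap) (x * y) =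
        ((TensorProduct.rid F B).toLinearMap ∘ₗ
          TensorProduct.map η.toLinearMap
            (MonoidAlgebra.lift F F G (1 : G →* F)).toLinearMap) x *
        ((TensorProduct.rid F B).toLinearMap ∘ₗ
          TensorProduct.map η.toLinearMap
            (MonoidAlgebra.lift F F G (1 : G →* F)).toLinearMap) y) := by
  set ε := ((TensorProduct.rid F B).toLinearMap ∘ₗ
      TensorProduct.map η.toLinearMap
        (MonoidAlgebra.lift F F G (1 : G →* F)).toLinearMap) with hε
  -- multiplicativity claims
  have hmul : ∀ g h : G, ∀ x ∈ coverComp 𝒲 g, ∀ y ∈ coverComp 𝒲 h,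
      x * y ∈ coverComp 𝒲 (g * h) := by
    intro g h x hx y hy
    have : x * y ∈ coverComp 𝒲 g * coverComp 𝒲 h := Submodule.mul_mem_mul hx hy
    refine SetLike.le_def.mp ?_ this
    rw [coverComp, coverComp, Submodule.span_mul_span]
    refine Submodule.span_le.mpr ?_
    rintro z ⟨x, ⟨a, ha, rfl⟩, y, ⟨b, hb, rfl⟩, rfl⟩
    refine Submodule.subset_span ⟨a * b, hWmul g h a ha b hb, ?_⟩
    simp only [Algebra.TensorProduct.tmul_mul_tmul, MonoidAlgebra.single_mul_single, one_mul]
  refine ⟨?_, hmul, ?_, ?_, ?_⟩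
  · -- independence
    intro g
    rw [disjoint_iff_inf_le]
    rintro x ⟨hx1, hx2⟩
    have h1 := proj_eq_of_mem hx1
    have h2 : proj g x = 0 := by
      have : Submodule.map (proj g) (⨆ h, ⨆ _ : h ≠ g, coverComp 𝒲 h) = ⊥ := by
        rw [Submodule.map_iSup]
        refine iSup_eq_bot.mpr fun h => ?_
        rw [Submodule.map_iSup]
        refine iSup_eq_bot.mpr fun hne => ?_
        rw [Submodule.eq_bot_iff]
        rintro y ⟨z, hz, rfl⟩
        exact proj_eq_zero_of_mem hne hz
      have := this ▸ Submodule.mem_map_of_mem (f := proj g) hx2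
      simpa using this
    rw [h1.1, h2, TensorProduct.zero_tmul]
    exact Submodule.zero_mem _
  · -- sup = adjoin
    have hclosed : ∀ x ∈ (⨆ g, coverComp 𝒲 g), ∀ y ∈ (⨆ g, coverComp 𝒲 g),
        x * y ∈ (⨆ g, coverComp 𝒲 g) := by
      intro x hx y hy
      induction hx using Submodule.iSup_induction' with
      | mem g x hxg =>
        induction hy using Submodule.iSup_induction' with
        | mem h y hyh =>
          exact Submodule.mem_iSup_of_mem (g * h) (hmul g h x hxg y hyh)
        | zero => simp
        | add y z _ _ ihy ihz => rw [mul_add]; exact add_mem ihy ihz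
      | zero => simp
      | add x z _ _ ihx ihz => rw [add_mul]; exact add_mem ihx ihz
    refine le_antisymm ?_ ?_
    · refine iSup_le fun g => ?_
      rw [coverComp, Submodule.span_le]
      intro z hz
      exact NonUnitalAlgebra.subset_adjoin F
        (Set.mem_iUnion.mpr ⟨g, Submodule.subset_span hz⟩)
    · have : NonUnitalAlgebra.adjoin F
          (⋃ g, (coverComp 𝒲 g : Set (W ⊗[F] MonoidAlgebra F G))) ≤
          (⨆ g, coverComp 𝒲 g).toNonUnitalSubalgebra (fun x y hx hy => hclosed x hx y hy) := by
        refine NonUnitalAlgebra.adjoin_le ?_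
        rintro z hz
        obtain ⟨g, hg⟩ := Set.mem_iUnion.mp hz
        exact Submodule.mem_iSup_of_mem g hg
      exact this
  · -- map onto ℬ g
    intro g
    have hεt : ∀ (a : W), ε (a ⊗ₜ[F] (MonoidAlgebra.single g (1:F))) = η a := by
      intro a
      simp [hε, MonoidAlgebra.lift_single]
    rw [coverComp, Submodule.map_span]
    have himg : ε '' {z | ∃ a ∈ 𝒲 g, z = a ⊗ₜ[F] (MonoidAlgebra.single g (1 : F))}
        = η '' (𝒲 g : Set W) := by
      ext b
      constructor
      · rintro ⟨z, ⟨a, ha, rfl⟩, rfl⟩; exact ⟨a, ha, (hεt a).symm⟩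
      · rintro ⟨a, ha, rfl⟩; exact ⟨a ⊗ₜ _, ⟨a, ha, rfl⟩, hεt a⟩
    rw [himg]
    have : η '' (𝒲 g : Set W) = (ℬ g : Set B) := by
      rw [h𝒲 g]
      exact Set.image_preimage_eq_of_subset (fun b _ => hη b)
    rw [this, Submodule.span_eq]
  · -- multiplicativity of ε
    have : ε = ((Algebra.TensorProduct.rid F F B).toAlgHom.comp
        (Algebra.TensorProduct.map η (MonoidAlgebra.lift F F G (1 : G →* F)))).toLinearMap := by
      ext a f
      simp [hε, Algebra.TensorProduct.rid_tmul]
    intro x y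
    rw [this]
    simp only [AlgHom.toLinearMap_apply]
    exact map_mul _ x y
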